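/- Fix m > 0, τ > 0, ď > 0, r_t > 0, λ > 0 and define ρ(m_v) = [m + m_v + τ(λτ + ď)] / [2λ(τ ď(λτ + ď + r_t^{-1}) + (m + m_v)(ď + r_t^{-1}))] for m_v ≥ 0. Then ρ is strictly decreasing in m_v, and for all m_v > 0: 1/(2λ(ď + r_t^{-1})) < ρ(m_v) < ρ(0), where the lower bound is lim_{m_v→∞} ρ(m_v). -/
import Mathlib


theorem stmt8 (m τ dch rt lam : ℝ) (hm : 0 < m) (hτ : 0 < τ) (hd : 0 < dch)
    (hrt : 0 < rt) (hlam : 0 < lam) :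
    let ρ : ℝ → ℝ := fun mv =>
      (m + mv + τ * (lam * τ + dch)) /
        (2 * lam * (τ * dch * (lam * τ + dch + rt⁻¹) + (m + mv) * (dch + rt⁻¹)))
    StrictAntiOn ρ (Set.Ici 0) ∧
      (∀ mv > 0, 1 / (2 * lam * (dch + rt⁻¹)) < ρ mv ∧ ρ mv < ρ 0) ∧
      Filter.Tendsto ρ Filter.atTop (nhds (1 / (2 * lam * (dch + rt⁻¹)))) := by
  intro ρ
  have hri : 0 < rt⁻¹ := inv_pos.2 hrt
  have hc : 0 < dch + rt⁻¹ := by linarith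
  have hden : ∀ x : ℝ, 0 ≤ x →
      0 < 2 * lam * (τ * dch * (lam * τ + dch + rt⁻¹) + (m + x) * (dch + rt⁻¹)) := by
    intro x hx
    have h1 : 0 < τ * dch * (lam * τ + dch + rt⁻¹) := by positivity
    have h2 : 0 < (m + x) * (dch + rt⁻¹) := mul_pos (by linarith) hc
    positivity
  have hanti : StrictAntiOn ρ (Set.Ici 0) := by
    intro a ha b hb hab
    simp only [Set.mem_Ici] at ha hb
    show ρ b < ρ a
    simp only [ρ]
    rw [div_lt_div_iff₀ (hden b hb) (hden a ha)]
    nlinarith [mul_pos (mul_pos (mul_pos hlam (mul_pos hτ hτ)) hri) (sub_pos.2 hab),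
      mul_pos (mul_pos (mul_pos (mul_pos hlam hlam) (mul_pos hτ hτ)) hri) (sub_pos.2 hab)]
  refine ⟨hanti, ?_, ?_⟩
  · intro mv hmv
    constructor
    · have h2 : 0 < 2 * lam * (dch + rt⁻¹) := by positivity
      rw [div_lt_div_iff₀ h2 (hden mv hmv.le)]
      nlinarith [mul_pos (mul_pos hlam (mul_pos hτ hτ)) hri,
        mul_pos (mul_pos (mul_pos hlam (mul_pos hτ hτ)) hri) (mul_pos hlam hc)]
    · exact hanti (Set.mem_Ici.2 le_rfl) (Set.mem_Ici.2 hmv.le) hmv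
  · set A : ℝ := m + τ * (lam * τ + dch) with hA
    set D : ℝ := 2 * lam * (τ * dch * (lam * τ + dch + rt⁻¹) + m * (dch + rt⁻¹)) with hD
    set E : ℝ := 2 * lam * (dch + rt⁻¹) with hE
    have hE0 : 0 < E := by rw [hE]; positivity
    have hlim : Filter.Tendsto (fun x : ℝ => (A / x + 1) / (D / x + E))
        Filter.atTop (nhds ((0 + 1) / (0 + E))) := by
      refine Filter.Tendsto.div (Filter.Tendsto.add ?_ tendsto_const_nhds)
        (Filter.Tendsto.add ?_ tendsto_const_nhds) (by simp [hE0.ne'])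
      · exact Filter.Tendsto.div_atTop tendsto_const_nhds Filter.tendsto_id
      · exact Filter.Tendsto.div_atTop tendsto_const_nhds Filter.tendsto_id
    have heq : (0 + 1) / (0 + E) = 1 / (2 * lam * (dch + rt⁻¹)) := by
      rw [hE]; ring
    rw [← heq]
    refine hlim.congr' ?_
    filter_upwards [Filter.eventually_gt_atTop 0] with x hx
    have hdx := hden x hx.le
    show (A / x + 1) / (D / x + E) = ρ x
    simp only [ρ, hA, hD, hE]
    field_simp
    ring
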